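/- arXiv:2210.00260 — 2 statements merged into one kernel-verified Lean document; each statement's English description precedes it below -/
import Mathlib

section
/- Bijectivity of the Kirchhoff transform: φ restricted to (−∞, h_d] is a strictly increasing bijection onto the interval (0, (h̄/(1−λβ))·(h_d/h̄)^{1−λβ}], and φ restricted to (−∞, 0) is a strictly increasing bijection onto the interval (0, (h̄/(1−λβ))·(h_d/h̄)^{1−λβ} − h_d·(h_d/h̄)^{−λβ}). -/
open Real Set Filter Topology

/-- The Kirchhoff transform associated with the Brooks–Corey model:
`φ(h) = (h̄/(1−λβ))·(h/h̄)^{1−λβ}` for `h ≤ h_d`, and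
`φ(h) = (h̄/(1−λβ))·(h_d/h̄)^{1−λβ} + (h_d/h̄)^{−λβ}·(h − h_d)` for `h > h_d`. -/
noncomputable def kirchhoff (lam beta hbar hd : ℝ) (h : ℝ) : ℝ :=
  if h ≤ hd then (hbar / (1 - lam * beta)) * (h / hbar) ^ (1 - lam * beta)
  else (hbar / (1 - lam * beta)) * (hd / hbar) ^ (1 - lam * beta)
        + (hd / hbar) ^ (-(lam * beta)) * (h - hd)

/-- Bijectivity of the Kirchhoff transform: `φ` is a strictly increasing bijection
from `(−∞, h_d]` onto `(0, (h̄/(1−λβ))·(h_d/h̄)^{1−λβ}]`, and a strictly increasing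
bijection from `(−∞, 0)` onto
`(0, (h̄/(1−λβ))·(h_d/h̄)^{1−λβ} − h_d·(h_d/h̄)^{−λβ})`. -/
theorem kirchhoff_bijOn
    (lam beta hbar hd : ℝ)
    (hlam : 0 < lam) (hbeta : 1 < beta) (hlb : 1 < lam * beta)
    (hhbar : hbar < 0) (hhd : hd < 0) :
    StrictMonoOn (kirchhoff lam beta hbar hd) (Set.Iic hd) ∧
    Set.BijOn (kirchhoff lam beta hbar hd) (Set.Iic hd)
      (Set.Ioc 0 ((hbar / (1 - lam * beta)) * (hd / hbar) ^ (1 - lam * beta))) ∧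
    StrictMonoOn (kirchhoff lam beta hbar hd) (Set.Iio (0 : ℝ)) ∧
    Set.BijOn (kirchhoff lam beta hbar hd) (Set.Iio (0 : ℝ))
      (Set.Ioo 0 ((hbar / (1 - lam * beta)) * (hd / hbar) ^ (1 - lam * beta)
        - hd * (hd / hbar) ^ (-(lam * beta)))) := by
  have ha : 1 - lam * beta < 0 := by linarith
  have ha0 : (1 : ℝ) - lam * beta ≠ 0 := ne_of_lt ha
  have hbne : hbar ≠ 0 := ne_of_lt hhbar
  set a : ℝ := 1 - lam * beta with ha_def
  set c : ℝ := hbar / a with hc_def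
  have hc : 0 < c := div_pos_of_neg_of_neg hhbar ha
  have hdb : 0 < hd / hbar := div_pos_of_neg_of_neg hhd hhbar
  set M : ℝ := c * (hd / hbar) ^ a with hM_def
  set s : ℝ := (hd / hbar) ^ (-(lam * beta)) with hs_def
  have hs : 0 < s := rpow_pos_of_pos hdb _
  have hM : 0 < M := mul_pos hc (rpow_pos_of_pos hdb _)
  set N : ℝ := M - hd * s with hN_def
  have hMN : M < N := by
    have : 0 < -hd * s := mul_pos (by linarith) hs
    simp only [hN_def]; linarith
  -- values of kirchhoff
  have hval1 : ∀ x : ℝ, x ≤ hd → kirchhoff lam beta hbar hd x = c * (x / hbar) ^ a := by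
    intro x hx; simp [kirchhoff, hx]; rfl
  have hval2 : ∀ x : ℝ, hd < x → kirchhoff lam beta hbar hd x = M + s * (x - hd) := by
    intro x hx; simp [kirchhoff, not_le.2 hx]; rfl
  -- strict mono of first piece
  have mono1 : ∀ x y : ℝ, x < y → y < 0 → c * (x / hbar) ^ a < c * (y / hbar) ^ a := by
    intro x y hxy hy
    have hyb : 0 < y / hbar := div_pos_of_neg_of_neg hy hhbar
    have hlt : y / hbar < x / hbar := by
      have h1 : 0 < (x - y) / hbar := div_pos_of_neg_of_neg (by linarith) hhbar
      have h2 : (x - y) / hbar = x / hbar - y / hbar := by ring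
      linarith [h2 ▸ h1]
    exact mul_lt_mul_of_pos_left (rpow_lt_rpow_of_neg hyb hlt ha) hc
  -- bound on first piece
  have hle1 : ∀ x : ℝ, x ≤ hd → c * (x / hbar) ^ a ≤ M := by
    intro x hx
    have hlt : hd / hbar ≤ x / hbar := by
      have h1 : 0 ≤ (x - hd) / hbar := by
        rcases eq_or_lt_of_le hx with rfl | h
        · simp
        · exact le_of_lt (div_pos_of_neg_of_neg (by linarith) hhbar)
      have h2 : (x - hd) / hbar = x / hbar - hd / hbar := by ring
      linarith [h2 ▸ h1]
    exact mul_le_mul_of_nonneg_left (rpow_le_rpow_of_nonpos hdb hlt (le_of_lt ha)) (le_of_lt hc)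
  have hpos1 : ∀ x : ℝ, x < 0 → 0 < c * (x / hbar) ^ a := by
    intro x hx
    exact mul_pos hc (rpow_pos_of_pos (div_pos_of_neg_of_neg hx hhbar) _)
  -- surjectivity of the first piece
  have surj1 : ∀ y : ℝ, 0 < y → y ≤ M → ∃ x, x ≤ hd ∧ kirchhoff lam beta hbar hd x = y := by
    intro y hy0 hyM
    set t : ℝ := y / c with ht_def
    have ht : 0 < t := div_pos hy0 hc
    have htM : t ≤ (hd / hbar) ^ a := by
      rw [ht_def, div_le_iff₀ hc, mul_comm]; exact hyM
    refine ⟨hbar * t ^ (1 / a), ?_, ?_⟩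
    · have h1 : ((hd / hbar) ^ a) ^ (1 / a) ≤ t ^ (1 / a) :=
        rpow_le_rpow_of_nonpos ht htM (le_of_lt (div_neg_of_pos_of_neg one_pos ha))
      have h2 : ((hd / hbar) ^ a) ^ (1 / a) = hd / hbar := by
        rw [← rpow_mul (le_of_lt hdb), mul_one_div_cancel ha0, rpow_one]
      have h3 : hbar * t ^ (1 / a) ≤ hbar * (hd / hbar) := by
        apply mul_le_mul_of_nonpos_left _ (le_of_lt hhbar)
        rw [← h2]; exact h1
      have h4 : hbar * (hd / hbar) = hd := by field_simp
      linarith [h4 ▸ h3]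
    · have hx : hbar * t ^ (1 / a) ≤ hd := by
        have h1 : ((hd / hbar) ^ a) ^ (1 / a) ≤ t ^ (1 / a) :=
          rpow_le_rpow_of_nonpos ht htM (le_of_lt (div_neg_of_pos_of_neg one_pos ha))
        have h2 : ((hd / hbar) ^ a) ^ (1 / a) = hd / hbar := by
          rw [← rpow_mul (le_of_lt hdb), mul_one_div_cancel ha0, rpow_one]
        have h3 : hbar * t ^ (1 / a) ≤ hbar * (hd / hbar) := by
          apply mul_le_mul_of_nonpos_left _ (le_of_lt hhbar)
          rw [← h2]; exact h1
        have h4 : hbar * (hd / hbar) = hd := by field_simp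
        linarith [h4 ▸ h3]
      rw [hval1 _ hx]
      have h5 : hbar * t ^ (1 / a) / hbar = t ^ (1 / a) := by
        rw [mul_comm, mul_div_assoc, div_self hbne, mul_one]
      rw [h5, ← rpow_mul (le_of_lt ht), one_div_mul_cancel ha0, rpow_one, ht_def]
      field_simp
  -- strict mono on Iic hd
  have smono1 : StrictMonoOn (kirchhoff lam beta hbar hd) (Set.Iic hd) := by
    intro x hx y hy hxy
    simp only [Set.mem_Iic] at hx hy
    rw [hval1 _ hx, hval1 _ hy]
    exact mono1 x y hxy (lt_of_le_of_lt hy hhd)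
  -- strict mono on Iio 0
  have smono2 : StrictMonoOn (kirchhoff lam beta hbar hd) (Set.Iio (0 : ℝ)) := by
    intro x hx y hy hxy
    simp only [Set.mem_Iio] at hx hy
    by_cases hxd : x ≤ hd
    · by_cases hyd : y ≤ hd
      · rw [hval1 _ hxd, hval1 _ hyd]; exact mono1 x y hxy hy
      · push_neg at hyd
        rw [hval1 _ hxd, hval2 _ hyd]
        have h1 : c * (x / hbar) ^ a ≤ M := hle1 x hxd
        have h2 : 0 < s * (y - hd) := mul_pos hs (by linarith)
        linarith
    · push_neg at hxd
      have hyd : hd < y := lt_trans hxd hxy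
      rw [hval2 _ hxd, hval2 _ hyd]
      have : s * (x - hd) < s * (y - hd) := by
        apply mul_lt_mul_of_pos_left _ hs; linarith
      linarith
  refine ⟨smono1, ⟨?_, smono1.injOn, ?_⟩, smono2, ⟨?_, smono2.injOn, ?_⟩⟩
  · -- MapsTo Iic
    intro x hx
    simp only [Set.mem_Iic] at hx
    rw [Set.mem_Ioc, hval1 _ hx]
    exact ⟨hpos1 x (lt_of_le_of_lt hx hhd), hle1 x hx⟩
  · -- SurjOn Iic
    intro y hy
    rw [Set.mem_Ioc] at hy
    obtain ⟨x, hx1, hx2⟩ := surj1 y hy.1 hy.2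
    exact ⟨x, hx1, hx2⟩
  · -- MapsTo Iio
    intro x hx
    simp only [Set.mem_Iio] at hx
    rw [Set.mem_Ioo]
    by_cases hxd : x ≤ hd
    · rw [hval1 _ hxd]
      exact ⟨hpos1 x hx, lt_of_le_of_lt (hle1 x hxd) hMN⟩
    · push_neg at hxd
      rw [hval2 _ hxd]
      constructor
      · have : 0 < s * (x - hd) := mul_pos hs (by linarith)
        linarith
      · have : s * (x - hd) < s * (0 - hd) := by
          apply mul_lt_mul_of_pos_left _ hs; linarith
        have h2 : s * (0 - hd) = -hd * s := by ring
        simp only [hN_def]; linarith [h2 ▸ this]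
  · -- SurjOn Iio
    intro y hy
    rw [Set.mem_Ioo] at hy
    by_cases hyM : y ≤ M
    · obtain ⟨x, hx1, hx2⟩ := surj1 y hy.1 hyM
      exact ⟨x, lt_of_le_of_lt hx1 hhd, hx2⟩
    · push_neg at hyM
      refine ⟨hd + (y - M) / s, ?_, ?_⟩
      · have h1 : (y - M) / s < -hd := by
          rw [div_lt_iff₀ hs]
          have : y < N := hy.2
          simp only [hN_def] at this
          nlinarith
        simp only [Set.mem_Iio]; linarith
      · have hxd : hd < hd + (y - M) / s := by
          have : 0 < (y - M) / s := div_pos (by linarith) hs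
          linarith
        rw [hval2 _ hxd]
        have h6 : hd + (y - M) / s - hd = (y - M) / s := by ring
        rw [h6, mul_div_cancel₀ _ (ne_of_gt hs)]
        ring
end

section
/- Equivalence of the Richards equation and its Kirchhoff-transformed form in one space dimension in the unsaturated regime: let ϕ_p be a real number (porosity factor), K : ℝ → ℝ a function (saturated conductivity profile), and set ω = h̄/h_d and χ(z) = K(z)·ω^{−λβ}. Let u : ℝ × ℝ → ℝ (pressure head as a function of (z, t)) and fix a point (z₀, t₀). Assume: u(z, t₀) ≤ h_d for all z; t ↦ u(z₀, t) is differentiable at t₀; z ↦ u(z, t₀) is differentiable on ℝ; and the two functions z ↦ K(z)·ω^{−λβ}·(u(z,t₀)/h̄)^{−λβ}·∂_z u(z, t₀) and z ↦ K(z)·ω^{−λβ}·(u(z,t₀)/h̄)^{−λβ} are differentiable at z₀. Define v(z, t) = φ(u(z, t)), E = ϕ_p·(−λ/h̄)·ω^{−λ}·(u(z₀,t₀)/h̄)^{λβ−λ−1}, and F(z) = ((1−λβ)/h̄)·(u(z, t₀)/h̄)^{−1}. Then the equation ϕ_p·ω^{−λ}·∂_t[(u/h̄)^{−λ}](z₀,t₀)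 − ∂_z[K·ω^{−λβ}·(u/h̄)^{−λβ}·∂_z u](z₀,t₀) − ∂_z[K·ω^{−λβ}·(u/h̄)^{−λβ}](z₀,t₀) = 0 holds if and only if the Kirchhoff-transformed equation E·∂_t v(z₀,t₀) − ∂_z[χ·∂_z v](z₀,t₀) − ∂_z[χ·F·v](z₀,t₀) = 0 holds; indeed the three corresponding terms are equal: E·∂_t v(z₀,t₀) = ϕ_p·ω^{−λ}·∂_t[(u/h̄)^{−λ}](z₀,t₀), χ(z)·∂_z v(z, t₀) = K(z)·ω^{−λβ}·(u(z,t₀)/h̄)^{−λβ}·∂_z u(z, t₀) for all z, and χ(z)·F(z)·v(z, t₀) = K(z)·ω^{−λβ}·(u(z,t₀)/h̄)^{−λβ} for all z. -/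
open Real Set Filter Topology

lemma kirchhoff_hasDerivAt (lam beta hbar hd : ℝ)
    (hlb : 1 < lam * beta) (hhbar : hbar < 0) (hhd : hd < 0)
    (h0 : ℝ) (hh0 : h0 ≤ hd) :
    HasDerivAt (kirchhoff lam beta hbar hd) ((h0 / hbar) ^ (-(lam * beta))) h0 := by
  have hbne : hbar ≠ 0 := ne_of_lt hhbar
  have hlne : (1 : ℝ) - lam * beta ≠ 0 := by nlinarith
  have hpos : 0 < h0 / hbar :=
    div_pos_iff.mpr (Or.inr ⟨lt_of_le_of_lt hh0 hhd, hhbar⟩)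
  -- derivative of the first piece
  have h1 : HasDerivAt (fun h : ℝ => (hbar / (1 - lam * beta)) * (h / hbar) ^ (1 - lam * beta))
      ((h0 / hbar) ^ (-(lam * beta))) h0 := by
    have hdiv : HasDerivAt (fun h : ℝ => h / hbar) (1 / hbar) h0 := by
      simpa using (hasDerivAt_id h0).div_const hbar
    have hr := (Real.hasDerivAt_rpow_const (x := h0 / hbar) (p := 1 - lam * beta)
      (Or.inl (ne_of_gt hpos)))
    have := (hr.comp h0 hdiv).const_mul (hbar / (1 - lam * beta))
    refine this.congr_deriv ?_
    have : (1 : ℝ) - lam * beta - 1 = -(lam * beta) := by ring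
    rw [this]
    field_simp
  rcases eq_or_lt_of_le hh0 with heq | hlt
  · -- boundary point h0 = hd
    subst heq
    have h2 : HasDerivAt (fun h : ℝ =>
        (hbar / (1 - lam * beta)) * (h0 / hbar) ^ (1 - lam * beta)
          + (h0 / hbar) ^ (-(lam * beta)) * (h - h0))
        ((h0 / hbar) ^ (-(lam * beta))) h0 := by
      have : HasDerivAt (fun h : ℝ => h - h0) 1 h0 := (hasDerivAt_id h0).sub_const h0
      simpa using ((this.const_mul ((h0 / hbar) ^ (-(lam * beta)))).const_add
        ((hbar / (1 - lam * beta)) * (h0 / hbar) ^ (1 - lam * beta)))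
    have hIic : HasDerivWithinAt (kirchhoff lam beta hbar h0)
        ((h0 / hbar) ^ (-(lam * beta))) (Iic h0) h0 := by
      refine (h1.hasDerivWithinAt).congr (fun x hx => ?_) ?_
      · simp only [kirchhoff, if_pos (mem_Iic.mp hx)]
      · simp only [kirchhoff, if_pos le_rfl]
    have hIci : HasDerivWithinAt (kirchhoff lam beta hbar h0)
        ((h0 / hbar) ^ (-(lam * beta))) (Ici h0) h0 := by
      refine (h2.hasDerivWithinAt).congr (fun x hx => ?_) ?_
      · by_cases hxd : x ≤ h0
        · have hxe : x = h0 := le_antisymm hxd (mem_Ici.mp hx)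
          subst hxe
          simp [kirchhoff]
        · simp only [kirchhoff, if_neg hxd]
      · simp [kirchhoff]
    have := hIic.union hIci
    rw [Iic_union_Ici] at this
    rw [hasDerivWithinAt_univ] at this; exact this
  · -- interior point h0 < hd
    refine h1.congr_of_eventuallyEq ?_
    filter_upwards [Iio_mem_nhds hlt] with x hx
    simp only [kirchhoff, if_pos (le_of_lt (mem_Iio.mp hx))]

/-- Equivalence of the 1D Richards equation and its Kirchhoff-transformed form in
the unsaturated regime. With `ω = h̄/h_d`, `χ(z) = K(z)·ω^{−λβ}`,
`v = φ ∘ u`, `E = ϕ_p·(−λ/h̄)·ω^{−λ}·(u(z₀,t₀)/h̄)^{λβ−λ−1}` and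
`F(z) = ((1−λβ)/h̄)·(u(z,t₀)/h̄)^{−1}`, the three corresponding terms of the two
equations coincide, and the original equation holds at `(z₀,t₀)` iff the
Kirchhoff-transformed one does. -/
theorem richards_kirchhoff_equivalence_1d
    (lam beta hbar hd : ℝ)
    (hlam : 0 < lam) (hbeta : 1 < beta) (hlb : 1 < lam * beta)
    (hhbar : hbar < 0) (hhd : hd < 0)
    (phip : ℝ) (K : ℝ → ℝ) (u : ℝ → ℝ → ℝ) (z0 t0 : ℝ)
    (hu_le : ∀ z, u z t0 ≤ hd)
    (hut : DifferentiableAt ℝ (fun t => u z0 t) t0)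
    (huz : Differentiable ℝ (fun z => u z t0))
    (hflux : DifferentiableAt ℝ
      (fun z => K z * (hbar / hd) ^ (-(lam * beta)) *
        (u z t0 / hbar) ^ (-(lam * beta)) * deriv (fun z' => u z' t0) z) z0)
    (hgrav : DifferentiableAt ℝ
      (fun z => K z * (hbar / hd) ^ (-(lam * beta)) *
        (u z t0 / hbar) ^ (-(lam * beta))) z0) :
    -- the time terms agree: E·∂_t v = ϕ_p·ω^{−λ}·∂_t[(u/h̄)^{−λ}]
    ((phip * (-lam / hbar) * (hbar / hd) ^ (-lam) *
          (u z0 t0 / hbar) ^ (lam * beta - lam - 1)) *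
        deriv (fun t => kirchhoff lam beta hbar hd (u z0 t)) t0 =
      phip * (hbar / hd) ^ (-lam) *
        deriv (fun t => (u z0 t / hbar) ^ (-lam)) t0) ∧
    -- the flux terms agree: χ·∂_z v = K·ω^{−λβ}·(u/h̄)^{−λβ}·∂_z u
    (∀ z, (K z * (hbar / hd) ^ (-(lam * beta))) *
        deriv (fun z' => kirchhoff lam beta hbar hd (u z' t0)) z =
      K z * (hbar / hd) ^ (-(lam * beta)) * (u z t0 / hbar) ^ (-(lam * beta)) *
        deriv (fun z' => u z' t0) z) ∧
    -- the gravity terms agree: χ·F·v = K·ω^{−λβ}·(u/h̄)^{−λβ}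
    (∀ z, (K z * (hbar / hd) ^ (-(lam * beta))) *
        (((1 - lam * beta) / hbar) * (u z t0 / hbar) ^ (-1 : ℝ)) *
        kirchhoff lam beta hbar hd (u z t0) =
      K z * (hbar / hd) ^ (-(lam * beta)) * (u z t0 / hbar) ^ (-(lam * beta))) ∧
    -- equivalence of the two equations at (z₀, t₀)
    (phip * (hbar / hd) ^ (-lam) * deriv (fun t => (u z0 t / hbar) ^ (-lam)) t0
        - deriv (fun z => K z * (hbar / hd) ^ (-(lam * beta)) *
            (u z t0 / hbar) ^ (-(lam * beta)) * deriv (fun z' => u z' t0) z) z0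
        - deriv (fun z => K z * (hbar / hd) ^ (-(lam * beta)) *
            (u z t0 / hbar) ^ (-(lam * beta))) z0 = 0 ↔
      (phip * (-lam / hbar) * (hbar / hd) ^ (-lam) *
            (u z0 t0 / hbar) ^ (lam * beta - lam - 1)) *
          deriv (fun t => kirchhoff lam beta hbar hd (u z0 t)) t0
        - deriv (fun z => (K z * (hbar / hd) ^ (-(lam * beta))) *
            deriv (fun z' => kirchhoff lam beta hbar hd (u z' t0)) z) z0
        - deriv (fun z => (K z * (hbar / hd) ^ (-(lam * beta))) *
            (((1 - lam * beta) / hbar) * (u z t0 / hbar) ^ (-1 : ℝ)) *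
            kirchhoff lam beta hbar hd (u z t0)) z0 = 0) := by
  have hbne : hbar ≠ 0 := ne_of_lt hhbar
  have hlne : (1 : ℝ) - lam * beta ≠ 0 := by nlinarith
  have hx : ∀ z, 0 < u z t0 / hbar := fun z =>
    div_pos_iff.mpr (Or.inr ⟨lt_of_le_of_lt (hu_le z) hhd, hhbar⟩)
  -- derivative of kirchhoff ∘ u in z
  have hdz : ∀ z, deriv (fun z' => kirchhoff lam beta hbar hd (u z' t0)) z =
      (u z t0 / hbar) ^ (-(lam * beta)) * deriv (fun z' => u z' t0) z := by
    intro z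
    exact ((kirchhoff_hasDerivAt lam beta hbar hd hlb hhbar hhd (u z t0)
      (hu_le z)).comp z (huz z).hasDerivAt).deriv
  -- derivative in t
  have hdt : deriv (fun t => kirchhoff lam beta hbar hd (u z0 t)) t0 =
      (u z0 t0 / hbar) ^ (-(lam * beta)) * deriv (fun t => u z0 t) t0 :=
    ((kirchhoff_hasDerivAt lam beta hbar hd hlb hhbar hhd (u z0 t0)
      (hu_le z0)).comp t0 hut.hasDerivAt).deriv
  have hdt2 : deriv (fun t => (u z0 t / hbar) ^ (-lam)) t0 =
      (-lam) * (u z0 t0 / hbar) ^ (-lam - 1) *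
        (deriv (fun t => u z0 t) t0 / hbar) := by
    have hdiv : HasDerivAt (fun t => u z0 t / hbar)
        (deriv (fun t => u z0 t) t0 / hbar) t0 := hut.hasDerivAt.div_const hbar
    exact ((Real.hasDerivAt_rpow_const (x := u z0 t0 / hbar) (p := -lam)
      (Or.inl (ne_of_gt (hx z0)))).comp t0 hdiv).deriv
  -- the three term equalities
  have h1 : (phip * (-lam / hbar) * (hbar / hd) ^ (-lam) *
          (u z0 t0 / hbar) ^ (lam * beta - lam - 1)) *
        deriv (fun t => kirchhoff lam beta hbar hd (u z0 t)) t0 =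
      phip * (hbar / hd) ^ (-lam) *
        deriv (fun t => (u z0 t / hbar) ^ (-lam)) t0 := by
    rw [hdt, hdt2]
    have key : (u z0 t0 / hbar) ^ (lam * beta - lam - 1) *
        (u z0 t0 / hbar) ^ (-(lam * beta)) = (u z0 t0 / hbar) ^ (-lam - 1) := by
      rw [← Real.rpow_add (hx z0)]; ring_nf
    linear_combination (phip * (-lam / hbar) * (hbar / hd) ^ (-lam) *
      deriv (fun t => u z0 t) t0) * key
  have h2 : ∀ z, (K z * (hbar / hd) ^ (-(lam * beta))) *
        deriv (fun z' => kirchhoff lam beta hbar hd (u z' t0)) z =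
      K z * (hbar / hd) ^ (-(lam * beta)) * (u z t0 / hbar) ^ (-(lam * beta)) *
        deriv (fun z' => u z' t0) z := by
    intro z; rw [hdz z]; ring
  have h3 : ∀ z, (K z * (hbar / hd) ^ (-(lam * beta))) *
        (((1 - lam * beta) / hbar) * (u z t0 / hbar) ^ (-1 : ℝ)) *
        kirchhoff lam beta hbar hd (u z t0) =
      K z * (hbar / hd) ^ (-(lam * beta)) * (u z t0 / hbar) ^ (-(lam * beta)) := by
    intro z
    have hk : kirchhoff lam beta hbar hd (u z t0) =
        (hbar / (1 - lam * beta)) * (u z t0 / hbar) ^ (1 - lam * beta) := by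
      simp only [kirchhoff, if_pos (hu_le z)]
    rw [hk]
    have key : (u z t0 / hbar) ^ (-1 : ℝ) * (u z t0 / hbar) ^ (1 - lam * beta)
        = (u z t0 / hbar) ^ (-(lam * beta)) := by
      rw [← Real.rpow_add (hx z)]; ring_nf
    have c1 : (1 - lam * beta) / hbar * (hbar / (1 - lam * beta)) = 1 := by
      field_simp
    linear_combination (K z * (hbar / hd) ^ (-(lam * beta)) *
        ((1 - lam * beta) / hbar) * (hbar / (1 - lam * beta))) * key +
      (K z * (hbar / hd) ^ (-(lam * beta)) * (u z t0 / hbar) ^ (-(lam * beta))) * c1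
  refine ⟨h1, h2, h3, ?_⟩
  rw [← h1, funext h2, funext h3]
end
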